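/- arXiv:1107.1159 — 2 statements merged into one kernel-verified Lean document; each statement's English description precedes it below -/
import Mathlib

section
/- If a sequence of functions f_n : ℝ^d → ℝ satisfies ‖f_1‖_∞ ≤ A and ‖f_n‖_∞ ≤ A · Σ_{k=1}^{n-1} ((n-1)!/(k!(n-k)!)) ‖f_k‖_∞ ‖f_{n-k}‖_∞ for n ≥ 2, then ‖f_n‖_∞ ≤ A^{2n-1} · n! for all n ≥ 1. -/
open Finset

theorem stmt0 (d : ℕ) (A : ℝ) (hA : 1 ≤ A)
    (f : ℕ → BoundedContinuousFunction (EuclideanSpace ℝ (Fin d)) ℝ)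
    (h1 : ‖f 1‖ ≤ A)
    (hrec : ∀ n, 2 ≤ n →
      ‖f n‖ ≤ A * ∑ k ∈ Finset.Ico 1 n,
        ((Nat.factorial (n - 1) : ℝ) / (Nat.factorial k * Nat.factorial (n - k))) *
          ‖f k‖ * ‖f (n - k)‖) :
    ∀ n, 1 ≤ n → ‖f n‖ ≤ A ^ (2 * n - 1) * Nat.factorial n := by
  have hA0 : (0:ℝ) ≤ A := le_trans zero_le_one hA
  intro n
  induction n using Nat.strong_induction_on with
  | _ n ih =>
  intro hn
  rcases eq_or_lt_of_le hn with heq | h2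
  · rw [← heq]; simpa using h1
  · have hn2 : 2 ≤ n := h2
    refine (hrec n hn2).trans ?_
    have key : ∀ k ∈ Finset.Ico 1 n,
        ((Nat.factorial (n-1):ℝ)/(Nat.factorial k * Nat.factorial (n-k))) * ‖f k‖ * ‖f (n-k)‖
        ≤ (Nat.factorial (n-1):ℝ) * A^(2*n-2) := by
      intro k hk
      rw [Finset.mem_Ico] at hk
      have hk1 : 1 ≤ k := hk.1
      have hkn : k < n := hk.2
      have hnk1 : 1 ≤ n - k := by omega
      have hbk : ‖f k‖ ≤ A ^ (2*k-1) * Nat.factorial k := ih k hkn hk1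
      have hbnk : ‖f (n-k)‖ ≤ A ^ (2*(n-k)-1) * Nat.factorial (n-k) := ih (n-k) (by omega) hnk1
      have hc : (0:ℝ) ≤ (Nat.factorial (n-1):ℝ)/(Nat.factorial k * Nat.factorial (n-k)) := by
        positivity
      have step : ((Nat.factorial (n-1):ℝ)/(Nat.factorial k * Nat.factorial (n-k))) * ‖f k‖ * ‖f (n-k)‖
          ≤ ((Nat.factorial (n-1):ℝ)/(Nat.factorial k * Nat.factorial (n-k))) *
            (A ^ (2*k-1) * Nat.factorial k) * (A ^ (2*(n-k)-1) * Nat.factorial (n-k)) := by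
        apply mul_le_mul _ hbnk (norm_nonneg _)
        · positivity
        · exact mul_le_mul_of_nonneg_left hbk hc
      refine step.trans (le_of_eq ?_)
      have hkf : (Nat.factorial k : ℝ) ≠ 0 := Nat.cast_ne_zero.mpr (Nat.factorial_ne_zero k)
      have hnkf : (Nat.factorial (n-k) : ℝ) ≠ 0 := Nat.cast_ne_zero.mpr (Nat.factorial_ne_zero _)
      have hexp : 2*k-1 + (2*(n-k)-1) = 2*n-2 := by omega
      rw [← hexp, pow_add]
      field_simp
    have hsum := Finset.sum_le_card_nsmul _ _ _ key
    rw [Nat.card_Ico] at hsum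
    have h2' : A * ∑ k ∈ Finset.Ico 1 n,
        ((Nat.factorial (n-1):ℝ)/(Nat.factorial k * Nat.factorial (n-k))) * ‖f k‖ * ‖f (n-k)‖
        ≤ A * (((n-1:ℕ):ℝ) * ((Nat.factorial (n-1):ℝ) * A^(2*n-2))) := by
      apply mul_le_mul_of_nonneg_left _ hA0
      simpa [nsmul_eq_mul] using hsum
    refine h2'.trans ?_
    have hfac : ((n-1:ℕ):ℝ) * (Nat.factorial (n-1):ℝ) ≤ (Nat.factorial n : ℝ) := by
      have : (n-1) * Nat.factorial (n-1) ≤ n * Nat.factorial (n-1) :=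
        Nat.mul_le_mul_right _ (by omega)
      calc ((n-1:ℕ):ℝ) * (Nat.factorial (n-1):ℝ) = ((n-1) * Nat.factorial (n-1) : ℕ) := by
            push_cast; ring
        _ ≤ ((n * Nat.factorial (n-1) : ℕ) : ℝ) := by exact_mod_cast this
        _ = (Nat.factorial n : ℝ) := by
            rw [← Nat.succ_pred_eq_of_pos (by omega : 0 < n), Nat.factorial_succ]
            push_cast; ring_nf
    have hpow : A * A^(2*n-2) = A^(2*n-1) := by
      rw [← pow_succ']
      congr 1
      omega
    calc A * (((n-1:ℕ):ℝ) * ((Nat.factorial (n-1):ℝ) * A^(2*n-2)))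
        = (((n-1:ℕ):ℝ) * (Nat.factorial (n-1):ℝ)) * (A * A^(2*n-2)) := by ring
      _ ≤ (Nat.factorial n : ℝ) * (A * A^(2*n-2)) := by
          apply mul_le_mul_of_nonneg_right hfac; positivity
      _ = A^(2*n-1) * Nat.factorial n := by rw [hpow]; ring
end

section
/- Define f_n : ℝ^d → ℝ recursively by f_1 = ψ and f_n = β Σ_{k=1}^{n-1} (n!/(k!(n-k)!)) I_n(v f_k f_{n-k}) for n ≥ 2, where I_n is a linear operator from C_exp to bounded continuous functions with ‖I_n(g)‖_C ≤ (A/(n-1))‖g‖_{C_exp}, ψ is bounded, and v is bounded with compact support. Then each f_n is a well-defined bounded continuous function, and there is a constant A' such that ‖f_n‖_C ≤ (A')^{2n-1} n! for all n. -/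
open Finset BoundedContinuousFunction

/-- The weighted supremum norm `‖g‖_{C_exp} = sup_x |g x| e^{|x|²}`. -/
noncomputable def CexpNorm {d : ℕ} (g : EuclideanSpace ℝ (Fin d) → ℝ) : ℝ :=
  ⨆ x, |g x| * Real.exp (‖x‖ ^ 2)

theorem stmt17 (d : ℕ) (beta A : ℝ) (hbeta : 0 < beta) (hA : 0 < A)
    (psi v : BoundedContinuousFunction (EuclideanSpace ℝ (Fin d)) ℝ)
    (hv : HasCompactSupport (v : EuclideanSpace ℝ (Fin d) → ℝ))
    -- `v f g ∈ C_exp` with `‖v f g‖_{C_exp} ≤ C_v ‖f‖ ‖g‖` (a consequence of the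
    -- compact support of `v`)
    (Cv : ℝ)
    (hCv : ∀ f g : BoundedContinuousFunction (EuclideanSpace ℝ (Fin d)) ℝ,
      CexpNorm (fun x => v x * f x * g x) ≤ Cv * ‖f‖ * ‖g‖)
    -- the operators `I_n`, bounded from `C_exp` to bounded continuous functions
    (I : ℕ → (EuclideanSpace ℝ (Fin d) → ℝ) →
      BoundedContinuousFunction (EuclideanSpace ℝ (Fin d)) ℝ)
    (hI : ∀ n : ℕ, 2 ≤ n → ∀ g : EuclideanSpace ℝ (Fin d) → ℝ,
      ‖I n g‖ ≤ A / (n - 1) * CexpNorm g)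
    -- the recursively defined sequence `f_n`
    (f : ℕ → BoundedContinuousFunction (EuclideanSpace ℝ (Fin d)) ℝ)
    (hf1 : f 1 = psi)
    (hfn : ∀ n : ℕ, 2 ≤ n →
      f n = beta • ∑ k ∈ Finset.Ico 1 n,
        ((Nat.factorial n : ℝ) / (Nat.factorial k * Nat.factorial (n - k))) •
          I n (fun x => v x * f k x * f (n - k) x)) :
    ∃ A' : ℝ, ∀ n : ℕ, 1 ≤ n → ‖f n‖ ≤ A' ^ (2 * n - 1) * Nat.factorial n := by

  set Cv' := max Cv 0 with hCv'def
  have hCv0 : (0:ℝ) ≤ Cv' := le_max_right _ _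
  set B := max (max ‖psi‖ (beta * A * Cv')) 1 with hBdef
  have hB1 : (1:ℝ) ≤ B := le_max_right _ _
  have hB0 : (0:ℝ) ≤ B := zero_le_one.trans hB1
  have hpsi : ‖psi‖ ≤ B := (le_max_left _ _).trans (le_max_left _ _)
  have hbAC : beta * A * Cv' ≤ B := (le_max_right _ _).trans (le_max_left _ _)
  refine ⟨B, ?_⟩
  intro n
  induction n using Nat.strong_induction_on with
  | _ n ih =>
  intro hn
  rcases eq_or_lt_of_le hn with h1 | hn2
  · rw [← h1, hf1]
    simpa using hpsi
  · have hn2 : 2 ≤ n := hn2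
    have hnR : (2:ℝ) ≤ (n:ℝ) := by exact_mod_cast hn2
    have hne : (n:ℝ) - 1 ≠ 0 := by linarith
    have hfracpos : (0:ℝ) ≤ A / ((n:ℝ) - 1) := by
      apply div_nonneg hA.le; linarith
    rw [hfn n hn2]
    set T : ℝ := A / ((n:ℝ) - 1) * (Cv' * (B ^ (2*n-2) * (Nat.factorial n : ℝ))) with hTdef
    have key : ∀ k ∈ Finset.Ico 1 n,
        ‖((Nat.factorial n : ℝ) / (Nat.factorial k * Nat.factorial (n-k))) •
          I n (fun x => v x * f k x * f (n-k) x)‖ ≤ T := by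
      intro k hk
      rw [Finset.mem_Ico] at hk
      obtain ⟨hk1, hkn⟩ := hk
      have hknk : 1 ≤ n - k := by omega
      have hkn' : n - k < n := by omega
      have ihk := ih k hkn hk1
      have ihnk := ih (n - k) hkn' hknk
      have hc : (0:ℝ) ≤ (Nat.factorial n : ℝ) / (Nat.factorial k * Nat.factorial (n-k)) := by
        positivity
      have h0 : ‖((Nat.factorial n : ℝ) / (Nat.factorial k * Nat.factorial (n-k))) •
            I n (fun x => v x * f k x * f (n-k) x)‖
          ≤ ((Nat.factorial n : ℝ) / (Nat.factorial k * Nat.factorial (n-k))) *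
            ‖I n (fun x => v x * f k x * f (n-k) x)‖ := by
        simpa [abs_of_nonneg hc] using norm_smul_le
          ((Nat.factorial n : ℝ) / (Nat.factorial k * Nat.factorial (n-k)))
          (I n (fun x => v x * f k x * f (n-k) x))
      refine h0.trans ?_
      have hCb : CexpNorm (fun x => v x * f k x * f (n-k) x)
          ≤ Cv' * (B ^ (2*k-1) * (Nat.factorial k : ℝ))
              * (B ^ (2*(n-k)-1) * (Nat.factorial (n-k) : ℝ)) := by
        refine (hCv (f k) (f (n-k))).trans ?_
        have h1 : Cv * ‖f k‖ * ‖f (n-k)‖ ≤ Cv' * ‖f k‖ * ‖f (n-k)‖ :=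
          mul_le_mul_of_nonneg_right (mul_le_mul_of_nonneg_right (le_max_left Cv 0)
            (norm_nonneg _)) (norm_nonneg _)
        refine h1.trans ?_
        have h2 : Cv' * ‖f k‖ ≤ Cv' * (B ^ (2*k-1) * (Nat.factorial k : ℝ)) :=
          mul_le_mul_of_nonneg_left ihk hCv0
        exact mul_le_mul h2 ihnk (norm_nonneg _) (by positivity)
      have hIb : ‖I n (fun x => v x * f k x * f (n-k) x)‖
          ≤ A / ((n:ℝ) - 1) * (Cv' * (B ^ (2*k-1) * (Nat.factorial k : ℝ))
              * (B ^ (2*(n-k)-1) * (Nat.factorial (n-k) : ℝ))) := by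
        refine (hI n hn2 _).trans ?_
        exact mul_le_mul_of_nonneg_left hCb hfracpos
      refine (mul_le_mul_of_nonneg_left hIb hc).trans_eq ?_
      rw [hTdef]
      have hpow : B ^ (2*k-1) * B ^ (2*(n-k)-1) = B ^ (2*n-2) := by
        rw [← pow_add]; congr 1; omega
      have hfact : (Nat.factorial n : ℝ) / (Nat.factorial k * Nat.factorial (n-k))
          * ((Nat.factorial k : ℝ) * (Nat.factorial (n-k))) = (Nat.factorial n : ℝ) := by
        apply div_mul_cancel₀
        positivity
      calc (Nat.factorial n : ℝ) / (Nat.factorial k * Nat.factorial (n-k))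
            * (A / ((n:ℝ) - 1) * (Cv' * (B ^ (2*k-1) * (Nat.factorial k : ℝ))
              * (B ^ (2*(n-k)-1) * (Nat.factorial (n-k) : ℝ))))
          = A / ((n:ℝ) - 1) * (Cv' * ((B ^ (2*k-1) * B ^ (2*(n-k)-1))
              * ((Nat.factorial n : ℝ) / (Nat.factorial k * Nat.factorial (n-k))
                * ((Nat.factorial k : ℝ) * (Nat.factorial (n-k)))))) := by ring
        _ = A / ((n:ℝ) - 1) * (Cv' * (B ^ (2*n-2) * (Nat.factorial n : ℝ))) := by
            rw [hpow, hfact]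
    have hsum : ‖∑ k ∈ Finset.Ico 1 n,
        ((Nat.factorial n : ℝ) / (Nat.factorial k * Nat.factorial (n-k))) •
          I n (fun x => v x * f k x * f (n-k) x)‖ ≤ ((n:ℝ) - 1) * T := by
      refine (norm_sum_le _ _).trans ?_
      have := Finset.sum_le_card_nsmul (Finset.Ico 1 n) _ T key
      rw [Nat.card_Ico, nsmul_eq_mul] at this
      refine this.trans_eq ?_
      congr 1
      rw [Nat.cast_sub (by omega)]
      simp
    have hb0 : ‖beta • ∑ k ∈ Finset.Ico 1 n,
          ((Nat.factorial n : ℝ) / (Nat.factorial k * Nat.factorial (n-k))) •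
            I n (fun x => v x * f k x * f (n-k) x)‖
        ≤ beta * ‖∑ k ∈ Finset.Ico 1 n,
          ((Nat.factorial n : ℝ) / (Nat.factorial k * Nat.factorial (n-k))) •
            I n (fun x => v x * f k x * f (n-k) x)‖ := by
      simpa [abs_of_nonneg hbeta.le] using norm_smul_le beta
        (∑ k ∈ Finset.Ico 1 n,
          ((Nat.factorial n : ℝ) / (Nat.factorial k * Nat.factorial (n-k))) •
            I n (fun x => v x * f k x * f (n-k) x))
    refine hb0.trans ?_
    have hTval : ((n:ℝ) - 1) * T = A * (Cv' * (B ^ (2*n-2) * (Nat.factorial n : ℝ))) := by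
      rw [hTdef, ← mul_assoc, mul_comm ((n:ℝ)-1) (A / ((n:ℝ)-1)), div_mul_cancel₀ _ hne]
    have hstep : beta * ‖∑ k ∈ Finset.Ico 1 n,
        ((Nat.factorial n : ℝ) / (Nat.factorial k * Nat.factorial (n-k))) •
          I n (fun x => v x * f k x * f (n-k) x)‖
        ≤ beta * (A * (Cv' * (B ^ (2*n-2) * (Nat.factorial n : ℝ)))) := by
      rw [← hTval]
      exact mul_le_mul_of_nonneg_left hsum hbeta.le
    refine hstep.trans ?_
    have h2n : 2*n-1 = (2*n-2)+1 := by omega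
    rw [h2n, pow_succ]
    have : beta * (A * (Cv' * (B ^ (2*n-2) * (Nat.factorial n : ℝ))))
        = (beta * A * Cv') * (B ^ (2*n-2) * (Nat.factorial n : ℝ)) := by ring
    rw [this]
    have hle : (beta * A * Cv') * (B ^ (2*n-2) * (Nat.factorial n : ℝ))
        ≤ B * (B ^ (2*n-2) * (Nat.factorial n : ℝ)) := by
      apply mul_le_mul_of_nonneg_right hbAC
      positivity
    refine hle.trans_eq ?_
    ring
end
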